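/- With F_λ(α, θ) = b^{−λ} Σ_{0 ≤ n < b^λ} e(α R_λ(n) − θ n), for any integers 0 ≤ λ' ≤ λ and reals α, θ one has the splitting |F_λ(α, θ)| = |F_{λ'}(α b^{λ−λ'}, θ)| · |F_{λ−λ'}(α, θ b^{λ'})|. -/

import Mathlib

/-- The `j`-th digit of `n` in base `b`. -/
def digit (b n j : ℕ) : ℕ := n / b ^ j % b

/-- The reverse of the `L` first digits of `n` in base `b`. -/
def rev (b L n : ℕ) : ℕ := ∑ j ∈ Finset.range L, digit b n j * b ^ (L - 1 - j)

/-- The exponential sum `F_λ(α,θ) = b^{-λ} ∑_{0 ≤ n < b^λ} e(α R_λ(n) - θ n)`. -/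
noncomputable def Fl (b L : ℕ) (α θ : ℝ) : ℂ :=
  (1 / (b : ℂ) ^ L) * ∑ n ∈ Finset.range (b ^ L),
    Complex.exp (2 * Real.pi * Complex.I * ((α * (rev b L n : ℝ) - θ * n : ℝ) : ℂ))

lemma digit_low {b : ℕ} (hb : 0 < b) (m k L' j : ℕ) (hj : j < L') :
    digit b (m + b ^ L' * k) j = digit b m j := by
  unfold digit
  have h : b ^ L' * k = b ^ j * (b * (b ^ (L' - j - 1) * k)) := by
    rw [← mul_assoc, ← mul_assoc, ← pow_succ, ← pow_add]
    congr 2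
    omega
  rw [h, Nat.add_mul_div_left _ _ (pow_pos hb j), Nat.add_mul_mod_self_left]

lemma digit_high {b : ℕ} (hb : 0 < b) (m k L' i : ℕ) (hm : m < b ^ L') :
    digit b (m + b ^ L' * k) (L' + i) = digit b k i := by
  unfold digit
  rw [pow_add, ← Nat.div_div_eq_div_mul, Nat.add_mul_div_left _ _ (pow_pos hb L'),
    Nat.div_eq_of_lt hm, zero_add]

lemma rev_add {b : ℕ} (hb : 0 < b) (m k L' D : ℕ) (hm : m < b ^ L') :
    rev b (L' + D) (m + b ^ L' * k) = rev b L' m * b ^ D + rev b D k := by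
  unfold rev
  rw [Finset.sum_range_add, Finset.sum_mul]
  congr 1
  · apply Finset.sum_congr rfl
    intro j hj
    rw [Finset.mem_range] at hj
    rw [digit_low hb m k L' j hj, mul_assoc, ← pow_add]
    congr 2
    omega
  · apply Finset.sum_congr rfl
    intro i hi
    rw [Finset.mem_range] at hi
    rw [digit_high hb m k L' i hm]
    congr 2
    omega

lemma Fl_mul (b L' D : ℕ) (hb : 0 < b) (α θ : ℝ) :
    Fl b (L' + D) α θ = Fl b L' (α * (b : ℝ) ^ D) θ * Fl b D α (θ * (b : ℝ) ^ L') := by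
  unfold Fl
  have hsum : ∑ n ∈ Finset.range (b ^ (L' + D)),
      Complex.exp (2 * Real.pi * Complex.I * ((α * (rev b (L' + D) n : ℝ) - θ * n : ℝ) : ℂ)) =
      ∑ p ∈ Finset.range (b ^ L') ×ˢ Finset.range (b ^ D),
      Complex.exp (2 * Real.pi * Complex.I *
        ((α * (rev b (L' + D) (p.1 + b ^ L' * p.2) : ℝ) - θ * ((p.1 + b ^ L' * p.2 : ℕ) : ℝ) : ℝ) : ℂ)) := by
    apply Finset.sum_nbij' (fun n => (n % b ^ L', n / b ^ L'))
      (fun p => p.1 + b ^ L' * p.2)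
    · intro n hn
      rw [Finset.mem_range] at hn
      rw [Finset.mem_product, Finset.mem_range, Finset.mem_range]
      constructor
      · exact Nat.mod_lt _ (pow_pos hb L')
      · rw [Nat.div_lt_iff_lt_mul (pow_pos hb L')]
        calc n < b ^ (L' + D) := hn
          _ = b ^ D * b ^ L' := by rw [pow_add, mul_comm]
    · intro p hp
      rw [Finset.mem_product, Finset.mem_range, Finset.mem_range] at hp
      rw [Finset.mem_range, pow_add]
      calc p.1 + b ^ L' * p.2 < b ^ L' + b ^ L' * p.2 := by omega
        _ ≤ b ^ L' * (p.2 + 1) := by ring_nf; omega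
        _ ≤ b ^ L' * b ^ D := Nat.mul_le_mul_left _ (by omega)
    · intro n _
      exact Nat.mod_add_div n (b ^ L')
    · intro p hp
      rw [Finset.mem_product, Finset.mem_range, Finset.mem_range] at hp
      rw [Prod.ext_iff]
      constructor
      · rw [Nat.add_mul_mod_self_left, Nat.mod_eq_of_lt hp.1]
      · rw [Nat.add_mul_div_left _ _ (pow_pos hb L'), Nat.div_eq_of_lt hp.1, zero_add]
    · intro n hn
      rw [Nat.mod_add_div]
  rw [hsum]
  have hterm : ∀ p ∈ Finset.range (b ^ L') ×ˢ Finset.range (b ^ D),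
      Complex.exp (2 * Real.pi * Complex.I *
        ((α * (rev b (L' + D) (p.1 + b ^ L' * p.2) : ℝ) - θ * ((p.1 + b ^ L' * p.2 : ℕ) : ℝ) : ℝ) : ℂ)) =
      Complex.exp (2 * Real.pi * Complex.I *
        ((α * (b : ℝ) ^ D * (rev b L' p.1 : ℝ) - θ * p.1 : ℝ) : ℂ)) *
      Complex.exp (2 * Real.pi * Complex.I *
        ((α * (rev b D p.2 : ℝ) - θ * (b : ℝ) ^ L' * p.2 : ℝ) : ℂ)) := by
    intro p hp
    rw [Finset.mem_product, Finset.mem_range, Finset.mem_range] at hp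
    rw [← Complex.exp_add, ← mul_add, ← Complex.ofReal_add]
    congr 2
    rw [rev_add hb p.1 p.2 L' D hp.1]
    push_cast
    ring
  rw [Finset.sum_congr rfl hterm, Finset.sum_product]
  simp only [← Finset.sum_mul_sum]
  push_cast [pow_add]
  field_simp

theorem stmt13 (b L L' : ℕ) (hb : 2 ≤ b) (hL : L' ≤ L) (α θ : ℝ) :
    ‖Fl b L α θ‖ =
      ‖Fl b L' (α * (b : ℝ) ^ (L - L')) θ‖ *
        ‖Fl b (L - L') α (θ * (b : ℝ) ^ L')‖ := by
  obtain ⟨D, rfl⟩ : ∃ D, L = L' + D := ⟨L - L', by omega⟩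
  rw [Nat.add_sub_cancel_left, Fl_mul b L' D (by omega) α θ, norm_mul]
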